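/- The space KD, the quotient of the lexicographic product [0,1]×[0,1]×{0,1} obtained by identifying (t,0,0) with (t,1,1) for every t ∈ [0,1], is not metrizably fibered: there is no continuous map f from KD to a metrizable space M such that f⁻¹(z) is metrizable for every z ∈ M. -/

import Mathlib

open TopologicalSpace

/-- A topological space `X` is metrizably fibered if there is a continuous map from `X`
to a metrizable space all of whose fibers are metrizable. -/
def MetrizablyFibered (X : Type*) [TopologicalSpace X] : Prop :=
  ∃ (M : Type) (_ : TopologicalSpace M), MetrizableSpace M ∧
    ∃ f : X → M, Continuous f ∧ ∀ z : M, MetrizableSpace ↥(f ⁻¹' {z})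

/-- The unit interval `[0,1]` as a linearly ordered set. -/
abbrev UnitInt : Type := ↥(Set.Icc (0 : ℝ) 1)

/-- `X = [0,1] ×_lex [0,1] ×_lex {0,1}` : the lexicographic product, where the two-point
set `{0,1}` is modelled by `Bool` (`false = 0 < 1 = true`). -/
abbrev XD : Type := Lex (UnitInt × Lex (UnitInt × Bool))

/-- `X` carries the order topology of the lexicographic order. -/
noncomputable instance : TopologicalSpace XD := Preorder.topology XD

/-- The identification relation: for each `t ∈ [0,1]`, the point `(t,0,0)` is glued to
the point `(t,1,1)`. -/
def rKD : XD → XD → Prop := fun u v =>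
  ∃ t : UnitInt,
    u = toLex (t, toLex ((⟨0, by norm_num⟩ : UnitInt), false)) ∧
    v = toLex (t, toLex ((⟨1, by norm_num⟩ : UnitInt), true))

/-- `KD` : the quotient of `X` identifying `(t,0,0)` with `(t,1,1)` for all `t ∈ [0,1]`,
with the quotient topology. -/
abbrev KD : Type := Quot rKD

open Filter Topology

/-! ### Auxiliary material -/

noncomputable instance : OrderTopology XD := ⟨rfl⟩

def z0 : UnitInt := ⟨0, by norm_num⟩
def z1 : UnitInt := ⟨1, by norm_num⟩

def PD (t x : UnitInt) (e : Bool) : XD := toLex (t, toLex (x, e))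

lemma PD_inj {t x t' x' : UnitInt} {e e' : Bool} (h : PD t x e = PD t' x' e') :
    t = t' ∧ x = x' ∧ e = e' := by
  unfold PD at h
  have h1 := toLex.injective h
  have h2 := congrArg Prod.snd h1
  have h3 := toLex.injective h2
  exact ⟨congrArg Prod.fst h1, congrArg Prod.fst h3, congrArg Prod.snd h3⟩

def eKD : XD → XD → Prop := fun u v => u = v ∨ rKD u v ∨ rKD v u

lemma eKD_equiv : Equivalence eKD := by
  constructor
  · intro x; exact Or.inl rfl
  · intro x y h; rcases h with h | h | h
    · exact Or.inl h.symm
    · exact Or.inr (Or.inr h)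
    · exact Or.inr (Or.inl h)
  · intro x y z hxy hyz
    rcases hxy with rfl | hxy | hxy
    · exact hyz
    · rcases hyz with rfl | hyz | hyz
      · exact Or.inr (Or.inl hxy)
      · obtain ⟨t, rfl, rfl⟩ := hxy
        obtain ⟨s, h1, h2⟩ := hyz
        exact absurd (PD_inj h1).2.2 (by decide)
      · obtain ⟨t, rfl, rfl⟩ := hxy
        obtain ⟨s, h1, h2⟩ := hyz
        obtain ⟨rfl, -, -⟩ := PD_inj h2
        exact Or.inl h1.symm
    · rcases hyz with rfl | hyz | hyz
      · exact Or.inr (Or.inr hxy)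
      · obtain ⟨t, rfl, rfl⟩ := hxy
        obtain ⟨s, h1, h2⟩ := hyz
        obtain ⟨rfl, -, -⟩ := PD_inj h1
        exact Or.inl h2.symm
      · obtain ⟨t, rfl, rfl⟩ := hxy
        obtain ⟨s, h1, h2⟩ := hyz
        exact absurd (PD_inj h2.symm).2.2 (by decide)

lemma quot_mk_eq {u v : XD} (h : Quot.mk rKD u = Quot.mk rKD v) : eKD u v := by
  have h2 := Quot.eqvGen_exact h
  have h3 := Relation.EqvGen.mono
    (fun a b hab => (Or.inr (Or.inl hab) : eKD a b)) _ _ h2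
  exact eKD_equiv.eqvGen_iff.mp h3

/-- The two points `(t,x,false)` and `(t,x,true)` with `x ≠ 0` are not identified in `KD`. -/
lemma quot_ne {t x : UnitInt} (hx : x ≠ z0) :
    Quot.mk rKD (PD t x false) ≠ Quot.mk rKD (PD t x true) := by
  intro h
  rcases quot_mk_eq h with h | h | h
  · exact absurd (PD_inj h).2.2 (by decide)
  · obtain ⟨s, h1, h2⟩ := h
    exact hx (PD_inj h1).2.1
  · obtain ⟨s, h1, h2⟩ := h
    exact absurd (PD_inj h2).2.2 (by decide)

lemma kd_not_lt_z0 (y : UnitInt) : ¬ y < z0 := by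
  intro h
  exact absurd y.2.1 (not_le.2 (show (y:ℝ) < (z0:ℝ) from h))

lemma kd_not_bool_lt_false (e : Bool) : ¬ e < false := by cases e <;> decide

lemma kd_not_lt_bot (v : Lex (UnitInt × Bool)) : ¬ v < toLex (z0, false) := by
  intro h
  rw [← toLex_ofLex v, Prod.Lex.lt_iff] at h
  rcases h with h | ⟨-, h⟩
  · exact kd_not_lt_z0 _ h
  · exact kd_not_bool_lt_false _ h

/-- Level-2 convergence: if `s k < t` and `s k → t` (as reals), then
`toLex (s k, w k) → toLex (t, (0, false))` in the order topology. -/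
lemma tendsto_level2 (t : UnitInt) (w : ℕ → Lex (UnitInt × Bool)) (s : ℕ → UnitInt)
    (hlt : ∀ k, s k < t) (hconv : Tendsto (fun k => (s k : ℝ)) atTop (𝓝 (t : ℝ))) :
    Tendsto (fun k => toLex (s k, w k)) atTop (𝓝 (toLex (t, toLex (z0, false)))) := by
  rw [tendsto_order]
  constructor
  · intro b hb
    rw [← toLex_ofLex b, Prod.Lex.lt_iff] at hb
    rcases hb with hb | ⟨-, hb⟩
    · have hev : ∀ᶠ k in atTop, ((ofLex b).1 : ℝ) < (s k : ℝ) :=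
        hconv.eventually (eventually_gt_nhds hb)
      filter_upwards [hev] with k hk
      rw [← toLex_ofLex b, Prod.Lex.lt_iff]
      exact Or.inl hk
    · exact absurd hb (kd_not_lt_bot _)
  · intro b hb
    filter_upwards with k
    refine lt_trans ?_ hb
    rw [Prod.Lex.lt_iff]
    exact Or.inl (hlt k)

/-- Level-1 convergence: within the slice at `t`, if `xs k < x` and `xs k → x` (as reals),
then `(t, xs k, e k) → (t, x, false)`. -/
lemma tendsto_level1 (t x : UnitInt) (xs : ℕ → UnitInt) (es : ℕ → Bool)
    (hlt : ∀ k, xs k < x) (hconv : Tendsto (fun k => (xs k : ℝ)) atTop (𝓝 (x : ℝ))) :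
    Tendsto (fun k => PD t (xs k) (es k)) atTop (𝓝 (PD t x false)) := by
  rw [tendsto_order]
  constructor
  · intro b hb
    simp only [PD] at hb ⊢
    rw [← toLex_ofLex b] at hb ⊢
    rw [Prod.Lex.lt_iff] at hb
    simp only [ofLex_toLex] at hb
    rcases hb with hb | ⟨hb1, hb2⟩
    · filter_upwards with k
      rw [Prod.Lex.lt_iff]
      exact Or.inl hb
    · rw [← toLex_ofLex (ofLex b).2, Prod.Lex.lt_iff] at hb2
      rcases hb2 with hb2 | ⟨-, hb2⟩
      · have hev : ∀ᶠ k in atTop, ((ofLex (ofLex b).2).1 : ℝ) < (xs k : ℝ) :=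
          hconv.eventually (eventually_gt_nhds hb2)
        filter_upwards [hev] with k hk
        rw [Prod.Lex.lt_iff]
        simp only [ofLex_toLex]
        refine Or.inr ⟨hb1, ?_⟩
        rw [← toLex_ofLex (ofLex b).2, Prod.Lex.lt_iff]
        exact Or.inl hk
      · exact absurd hb2 (kd_not_bool_lt_false _)
  · intro b hb
    filter_upwards with k
    refine lt_trans ?_ hb
    simp only [PD]
    rw [Prod.Lex.lt_iff]
    exact Or.inr ⟨rfl, by rw [Prod.Lex.lt_iff]; exact Or.inl (hlt k)⟩

/-- Any uncountable set of reals has a point which is a limit of the set strictly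
from the left. -/
lemma exists_left_limit {S : Set ℝ} (hS : ¬ S.Countable) :
    ∃ x : ℝ, ∃ u : ℕ → ℝ, (∀ k, u k ∈ S) ∧ (∀ k, u k < x) ∧
      Filter.Tendsto u atTop (𝓝 x) := by
  set T : Set ℝ := {x | x ∈ S ∧ ∃ q : ℚ, (q : ℝ) < x ∧ ∀ y ∈ S, (q : ℝ) < y → ¬ y < x} with hT
  have hTc : T.Countable := by
    have hsub : T ⊆ ⋃ q : ℚ, {x | x ∈ S ∧ (q : ℝ) < x ∧ ∀ y ∈ S, (q : ℝ) < y → ¬ y < x} := by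
      rintro x ⟨hxS, q, hq1, hq2⟩
      exact Set.mem_iUnion.2 ⟨q, hxS, hq1, hq2⟩
    refine Set.Countable.mono hsub (Set.countable_iUnion fun q => ?_)
    refine Set.Subsingleton.countable ?_
    rintro x ⟨hxS, hqx, hx⟩ y ⟨hyS, hqy, hy⟩
    by_contra hne
    rcases lt_or_gt_of_ne hne with h | h
    · exact hy x hxS hqx h
    · exact hx y hyS hqy h
  have hST : ¬ (S \ T = ∅) := by
    intro h
    have : S ⊆ T := fun x hx => by
      by_contra hxT
      exact absurd (Set.mem_diff_of_mem hx hxT) (by rw [h]; exact id)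
    exact hS (hTc.mono this)
  obtain ⟨x, hxS, hxT⟩ := Set.nonempty_iff_ne_empty.2 hST
  have key : ∀ k : ℕ, ∃ y ∈ S, x - 1/(k+1 : ℝ) < y ∧ y < x := by
    intro k
    have hlt : x - 1/(k+1 : ℝ) < x := by
      have : (0:ℝ) < 1/(k+1 : ℝ) := by positivity
      linarith
    obtain ⟨q, hq1, hq2⟩ := exists_rat_btwn hlt
    have : ¬ ∃ q : ℚ, (q : ℝ) < x ∧ ∀ y ∈ S, (q : ℝ) < y → ¬ y < x := fun h => hxT ⟨hxS, h⟩
    push_neg at this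
    obtain ⟨y, hyS, hqy, hyx⟩ := this q hq2
    exact ⟨y, hyS, lt_trans hq1 hqy, hyx⟩
  choose u huS hul hur using key
  refine ⟨x, u, huS, hur, ?_⟩
  have h1 : Filter.Tendsto (fun k : ℕ => x - 1/(k+1 : ℝ)) atTop (𝓝 x) := by
    have h2 := (tendsto_const_nhds : Filter.Tendsto (fun _ : ℕ => x) atTop (𝓝 x)).sub
      tendsto_one_div_add_atTop_nhds_zero_nat
    simpa using h2
  exact tendsto_of_tendsto_of_tendsto_of_le_of_le h1 tendsto_const_nhds
    (fun k => le_of_lt (hul k)) (fun k => le_of_lt (hur k))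

lemma not_countable_Ioo01 : ¬ (Set.Ioo (0:ℝ) 1).Countable := by
  intro h
  rw [← Cardinal.le_aleph0_iff_set_countable] at h
  rw [Cardinal.mk_Ioo_real (by norm_num : (0:ℝ) < 1)] at h
  exact absurd h (not_le.2 Cardinal.aleph0_lt_continuum)

lemma exists_uncountable_level {δ : ℝ → ℝ} (hδ : ∀ x ∈ Set.Ioo (0:ℝ) 1, 0 < δ x) :
    ∃ n : ℕ, ¬ {x | x ∈ Set.Ioo (0:ℝ) 1 ∧ 1/(n+1 : ℝ) ≤ δ x}.Countable := by
  by_contra h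
  push_neg at h
  apply not_countable_Ioo01
  refine Set.Countable.mono ?_ (Set.countable_iUnion h)
  intro x hx
  obtain ⟨n, hn⟩ := exists_nat_one_div_lt (hδ x hx)
  exact Set.mem_iUnion.2 ⟨n, hx, le_of_lt hn⟩

/-- If `f : KD → M` is continuous with metrizable fibers, then `f` is non-constant on each
slice `{t} × [0,1] × {0,1}`. -/
lemma slice_nonconst {M : Type} [TopologicalSpace M] (f : KD → M)
    (hfib : ∀ z : M, MetrizableSpace ↥(f ⁻¹' {z})) (t : UnitInt) :
    ∃ x e, f (Quot.mk rKD (PD t x e)) ≠ f (Quot.mk rKD (PD t z0 false)) := by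
  by_contra hcon
  push_neg at hcon
  set z := f (Quot.mk rKD (PD t z0 false)) with hz
  haveI := hfib z
  letI : MetricSpace ↥(f ⁻¹' {z}) := metrizableSpaceMetric ↥(f ⁻¹' {z})
  have hmem : ∀ x e, Quot.mk rKD (PD t x e) ∈ f ⁻¹' {z} := by
    intro x e
    simp only [Set.mem_preimage, Set.mem_singleton_iff]
    exact hcon x e
  set A : UnitInt → Bool → ↥(f ⁻¹' {z}) := fun x e => ⟨Quot.mk rKD (PD t x e), hmem x e⟩ with hA
  set δr : ℝ → ℝ := fun s =>
    if hs : s ∈ Set.Icc (0:ℝ) 1 then dist (A ⟨s, hs⟩ false) (A ⟨s, hs⟩ true) else 0 with hδr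
  have hpos : ∀ s ∈ Set.Ioo (0:ℝ) 1, 0 < δr s := by
    intro s hs
    have hs' : s ∈ Set.Icc (0:ℝ) 1 := Set.mem_Icc_of_Ioo hs
    have hne : A ⟨s, hs'⟩ false ≠ A ⟨s, hs'⟩ true := by
      intro h
      have := congrArg Subtype.val h
      exact quot_ne (by
        intro h0
        have := congrArg Subtype.val h0
        simp only [z0] at this
        exact absurd this (by exact ne_of_gt hs.1)) this
    simp only [hδr, dif_pos hs']
    exact dist_pos.2 hne
  obtain ⟨n, hn⟩ := exists_uncountable_level hpos
  obtain ⟨xst, u, huS, hul, hu⟩ := exists_left_limit hn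
  have huI : ∀ k, u k ∈ Set.Icc (0:ℝ) 1 := fun k => Set.mem_Icc_of_Ioo (huS k).1
  have hxst : xst ∈ Set.Icc (0:ℝ) 1 := by
    constructor
    · exact le_trans (le_of_lt (huS 0).1.1) (le_of_lt (hul 0))
    · exact le_of_tendsto hu (Eventually.of_forall fun k => le_of_lt (huS k).1.2)
  set X : UnitInt := ⟨xst, hxst⟩
  set xs : ℕ → UnitInt := fun k => ⟨u k, huI k⟩ with hxs
  have hlt : ∀ k, xs k < X := fun k => by
    show (⟨u k, huI k⟩ : UnitInt) < ⟨xst, hxst⟩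
    exact Subtype.mk_lt_mk.2 (hul k)
  have hconv : Tendsto (fun k => ((xs k : UnitInt) : ℝ)) atTop (𝓝 (X : ℝ)) := hu
  have t1 := tendsto_level1 t X xs (fun _ => false) hlt hconv
  have t2 := tendsto_level1 t X xs (fun _ => true) hlt hconv
  have q1 : Tendsto (fun k => Quot.mk rKD (PD t (xs k) false)) atTop
      (𝓝 (Quot.mk rKD (PD t X false))) := ((continuous_quot_mk).tendsto _).comp t1
  have q2 : Tendsto (fun k => Quot.mk rKD (PD t (xs k) true)) atTop
      (𝓝 (Quot.mk rKD (PD t X false))) := ((continuous_quot_mk).tendsto _).comp t2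
  set c : ↥(f ⁻¹' {z}) := A X false with hc
  have s1 : Tendsto (fun k => A (xs k) false) atTop (𝓝 c) := by
    rw [IsEmbedding.subtypeVal.tendsto_nhds_iff]
    exact q1
  have s2 : Tendsto (fun k => A (xs k) true) atTop (𝓝 c) := by
    rw [IsEmbedding.subtypeVal.tendsto_nhds_iff]
    exact q2
  have d1 : Tendsto (fun k => dist (A (xs k) false) c + dist (A (xs k) true) c) atTop (𝓝 0) := by
    have := (tendsto_iff_dist_tendsto_zero.1 s1).add (tendsto_iff_dist_tendsto_zero.1 s2)
    simpa using this
  have hev := d1.eventually (gt_mem_nhds (show (0:ℝ) < 1/(n+1 : ℝ) by positivity))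
  obtain ⟨k, hk⟩ := hev.exists
  have hδk : 1/(n+1 : ℝ) ≤ dist (A (xs k) false) (A (xs k) true) := by
    have h2 := (huS k).2
    rw [hδr] at h2
    simp only [dif_pos (huI k)] at h2
    exact h2
  have htri := dist_triangle_right (A (xs k) false) (A (xs k) true) c
  linarith


/-- The space `KD` is not metrizably fibered. -/
theorem KD_not_metrizablyFibered : ¬ MetrizablyFibered KD := by
  rintro ⟨M, tM, hM, f, hf, hfib⟩
  letI : MetricSpace M := metrizableSpaceMetric M
  have key := slice_nonconst f hfib
  choose xc ec hxe using key
  set g : UnitInt → KD := fun t => Quot.mk rKD (PD t (xc t) (ec t)) with hg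
  set h : UnitInt → KD := fun t => Quot.mk rKD (PD t z0 false) with hh
  set δr : ℝ → ℝ := fun s =>
    if hs : s ∈ Set.Icc (0:ℝ) 1 then dist (f (g ⟨s, hs⟩)) (f (h ⟨s, hs⟩)) else 0 with hδr
  have hpos : ∀ s ∈ Set.Ioo (0:ℝ) 1, 0 < δr s := by
    intro s hs
    have hs' : s ∈ Set.Icc (0:ℝ) 1 := Set.mem_Icc_of_Ioo hs
    simp only [hδr, dif_pos hs']
    exact dist_pos.2 (hxe ⟨s, hs'⟩)
  obtain ⟨n, hn⟩ := exists_uncountable_level hpos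
  obtain ⟨xst, u, huS, hul, hu⟩ := exists_left_limit hn
  have huI : ∀ k, u k ∈ Set.Icc (0:ℝ) 1 := fun k => Set.mem_Icc_of_Ioo (huS k).1
  have hxst : xst ∈ Set.Icc (0:ℝ) 1 := by
    constructor
    · exact le_trans (le_of_lt (huS 0).1.1) (le_of_lt (hul 0))
    · exact le_of_tendsto hu (Eventually.of_forall fun k => le_of_lt (huS k).1.2)
  set T : UnitInt := ⟨xst, hxst⟩
  set ts : ℕ → UnitInt := fun k => ⟨u k, huI k⟩ with hts
  have hlt : ∀ k, ts k < T := fun k => Subtype.mk_lt_mk.2 (hul k)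
  have hconv : Tendsto (fun k => ((ts k : UnitInt) : ℝ)) atTop (𝓝 (T : ℝ)) := hu
  have t1 : Tendsto (fun k => PD (ts k) (xc (ts k)) (ec (ts k))) atTop
      (𝓝 (toLex (T, toLex (z0, false)))) :=
    tendsto_level2 T (fun k => toLex (xc (ts k), ec (ts k))) ts hlt hconv
  have t2 : Tendsto (fun k => PD (ts k) z0 false) atTop
      (𝓝 (toLex (T, toLex (z0, false)))) :=
    tendsto_level2 T (fun _ => toLex (z0, false)) ts hlt hconv
  have hfq : Continuous (fun p : XD => f (Quot.mk rKD p)) := hf.comp continuous_quot_mk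
  have s1 : Tendsto (fun k => f (g (ts k))) atTop
      (𝓝 (f (Quot.mk rKD (toLex (T, toLex (z0, false)))))) :=
    (hfq.tendsto _).comp t1
  have s2 : Tendsto (fun k => f (h (ts k))) atTop
      (𝓝 (f (Quot.mk rKD (toLex (T, toLex (z0, false)))))) :=
    (hfq.tendsto _).comp t2
  have d1 : Tendsto (fun k => dist (f (g (ts k))) (f (Quot.mk rKD (toLex (T, toLex (z0, false)))))
      + dist (f (h (ts k))) (f (Quot.mk rKD (toLex (T, toLex (z0, false)))))) atTop (𝓝 0) := by
    have := (tendsto_iff_dist_tendsto_zero.1 s1).add (tendsto_iff_dist_tendsto_zero.1 s2)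
    simpa using this
  have hev := d1.eventually (gt_mem_nhds (show (0:ℝ) < 1/(n+1 : ℝ) by positivity))
  obtain ⟨k, hk⟩ := hev.exists
  have hδk : 1/(n+1 : ℝ) ≤ dist (f (g (ts k))) (f (h (ts k))) := by
    have h2 := (huS k).2
    rw [hδr] at h2
    simp only [dif_pos (huI k)] at h2
    exact h2
  have htri := dist_triangle_right (f (g (ts k))) (f (h (ts k)))
    (f (Quot.mk rKD (toLex (T, toLex (z0, false)))))
  linarith
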